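/- Let $x, y > 1$ be real numbers and let $(n_k)_{k\ge1}$, $(\tilde{n}_\ell)_{\ell\ge1}$ be nondecreasing sequences of nonnegative integers such that $(n_k+1)(\tilde{n}_\ell+1) \ge k\ell$ for all $k, \ell \ge 1$, and suppose $\sum_{k=1}^\infty y^{-k}x^{-n_k} = x - 1$ and $\sum_{\ell=1}^\infty x^{-\ell}y^{-\tilde{n}_\ell} = y - 1$ (both series converging). Then $\Big(1 + \sum_{k=1}^\infty \frac{n_k}{y^k x^{n_k+1}}\Big)\Big(1 + \sum_{\ell=1}^\infty \frac{\tilde{n}_\ell}{x^\ell y^{\tilde{n}_\ell+1}}\Big) > \sum_{k=1}^\infty \frac{k}{y^{k+1}x^{n_k}} \cdot \sum_{\ell=1}^\infty \frac{\ell}{x^{\ell+1}y^{\tilde{n}_\ell}}$. -/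

import Mathlib

set_option maxHeartbeats 1000000 in
theorem stmt17 (x y : ℝ) (hx : 1 < x) (hy : 1 < y) (n nt : ℕ → ℕ)
    (hmono : ∀ k, n (k + 1) ≤ n (k + 2)) (hmono' : ∀ l, nt (l + 1) ≤ nt (l + 2))
    (hineq : ∀ k l : ℕ, (k + 1) * (l + 1) ≤ (n (k + 1) + 1) * (nt (l + 1) + 1))
    (hsum1 : Summable (fun k : ℕ => 1 / (y ^ (k + 1) * x ^ n (k + 1))))
    (heq1 : ∑' k : ℕ, 1 / (y ^ (k + 1) * x ^ n (k + 1)) = x - 1)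
    (hsum2 : Summable (fun l : ℕ => 1 / (x ^ (l + 1) * y ^ nt (l + 1))))
    (heq2 : ∑' l : ℕ, 1 / (x ^ (l + 1) * y ^ nt (l + 1)) = y - 1) :
    Summable (fun k : ℕ => (n (k + 1) : ℝ) / (y ^ (k + 1) * x ^ (n (k + 1) + 1))) ∧
    Summable (fun l : ℕ => (nt (l + 1) : ℝ) / (x ^ (l + 1) * y ^ (nt (l + 1) + 1))) ∧
    Summable (fun k : ℕ => ((k : ℝ) + 1) / (y ^ (k + 2) * x ^ n (k + 1))) ∧
    Summable (fun l : ℕ => ((l : ℝ) + 1) / (x ^ (l + 2) * y ^ nt (l + 1))) ∧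
    (∑' k : ℕ, ((k : ℝ) + 1) / (y ^ (k + 2) * x ^ n (k + 1))) *
        (∑' l : ℕ, ((l : ℝ) + 1) / (x ^ (l + 2) * y ^ nt (l + 1))) <
      (1 + ∑' k : ℕ, (n (k + 1) : ℝ) / (y ^ (k + 1) * x ^ (n (k + 1) + 1))) *
        (1 + ∑' l : ℕ, (nt (l + 1) : ℝ) / (x ^ (l + 1) * y ^ (nt (l + 1) + 1))) := by
  have hx0 : (0:ℝ) < x := by linarith
  have hy0 : (0:ℝ) < y := by linarith
  set a : ℕ → ℝ := fun k : ℕ => 1 / (y ^ (k + 1) * x ^ n (k + 1)) with ha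
  set b : ℕ → ℝ := fun l : ℕ => 1 / (x ^ (l + 1) * y ^ nt (l + 1)) with hb
  have hap : ∀ k, 0 < a k := fun k => by rw [ha]; positivity
  have hbp : ∀ l, 0 < b l := fun l => by rw [hb]; positivity
  -- bound t*(x-1) ≤ x^t
  have hbx : ∀ t : ℕ, (t:ℝ) * (x - 1) ≤ x ^ t := by
    intro t
    have h := one_add_mul_le_pow (by linarith : (-2:ℝ) ≤ x - 1) t
    have hxx : (1:ℝ) + (x - 1) = x := by ring
    rw [hxx] at h; linarith
  have hby : ∀ t : ℕ, (t:ℝ) * (y - 1) ≤ y ^ t := by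
    intro t
    have h := one_add_mul_le_pow (by linarith : (-2:ℝ) ≤ y - 1) t
    have hyy : (1:ℝ) + (y - 1) = y := by ring
    rw [hyy] at h; linarith
  have hry : 1 / y < 1 := by rw [div_lt_one hy0]; linarith
  have hrx : 1 / x < 1 := by rw [div_lt_one hx0]; linarith
  have hry0 : (0:ℝ) ≤ 1 / y := by positivity
  have hrx0 : (0:ℝ) ≤ 1 / x := by positivity
  have hgy : Summable fun k : ℕ => (1 / (x - 1)) * (1 / y) ^ k :=
    (summable_geometric_of_lt_one hry0 hry).mul_left _
  have hgx : Summable fun l : ℕ => (1 / (y - 1)) * (1 / x) ^ l :=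
    (summable_geometric_of_lt_one hrx0 hrx).mul_left _
  -- Summable (n * a)
  have hsna : Summable fun k => (n (k + 1) : ℝ) * a k := by
    refine Summable.of_nonneg_of_le (fun k => by positivity) (fun k => ?_) hgy
    have h1 : (n (k + 1) : ℝ) ≤ x ^ n (k + 1) / (x - 1) := by
      rw [le_div_iff₀ (by linarith)]; exact hbx _
    calc (n (k + 1) : ℝ) * a k ≤ (x ^ n (k + 1) / (x - 1)) * a k :=
          mul_le_mul_of_nonneg_right h1 (hap k).le
      _ = (1 / (x - 1)) * (1 / y) ^ (k + 1) := by
          have h2 : x - 1 ≠ 0 := by linarith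
          have h3 : (x:ℝ) ^ n (k + 1) ≠ 0 := by positivity
          have h4 : (y:ℝ) ^ (k + 1) ≠ 0 := by positivity
          rw [ha, one_div_pow]; field_simp
      _ ≤ (1 / (x - 1)) * (1 / y) ^ k := by
          have h5 : (0:ℝ) < x - 1 := by linarith
          apply mul_le_mul_of_nonneg_left _ (by positivity)
          exact pow_le_pow_of_le_one hry0 hry.le (Nat.le_succ k)
  have hsnb : Summable fun l => (nt (l + 1) : ℝ) * b l := by
    refine Summable.of_nonneg_of_le (fun l => by positivity) (fun l => ?_) hgx
    have h1 : (nt (l + 1) : ℝ) ≤ y ^ nt (l + 1) / (y - 1) := by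
      rw [le_div_iff₀ (by linarith)]; exact hby _
    calc (nt (l + 1) : ℝ) * b l ≤ (y ^ nt (l + 1) / (y - 1)) * b l :=
          mul_le_mul_of_nonneg_right h1 (hbp l).le
      _ = (1 / (y - 1)) * (1 / x) ^ (l + 1) := by
          have h2 : y - 1 ≠ 0 := by linarith
          have h3 : (y:ℝ) ^ nt (l + 1) ≠ 0 := by positivity
          have h4 : (x:ℝ) ^ (l + 1) ≠ 0 := by positivity
          rw [hb, one_div_pow]; field_simp
      _ ≤ (1 / (y - 1)) * (1 / x) ^ l := by
          have h5 : (0:ℝ) < y - 1 := by linarith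
          apply mul_le_mul_of_nonneg_left _ (by positivity)
          exact pow_le_pow_of_le_one hrx0 hrx.le (Nat.le_succ l)
  -- Summable ((k+1) * a k)
  have hska : Summable fun k : ℕ => ((k:ℝ) + 1) * a k := by
    have hg : Summable fun m : ℕ => (m:ℝ) * (1 / y) ^ m := by
      have h := summable_pow_mul_geometric_of_norm_lt_one (R := ℝ) 1 (r := 1 / y) (by
        rw [Real.norm_eq_abs, abs_of_nonneg hry0]; exact hry)
      simpa using h
    have hg1 : Summable fun k : ℕ => ((k:ℝ) + 1) * (1 / y) ^ (k + 1) := by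
      refine ((summable_nat_add_iff 1).2 hg).congr fun k => ?_
      push_cast; ring
    refine Summable.of_nonneg_of_le (fun k => by positivity) (fun k => ?_) hg1
    refine mul_le_mul_of_nonneg_left ?_ (by positivity)
    rw [ha, div_pow, one_pow]
    exact one_div_le_one_div_of_le (by positivity)
      (le_mul_of_one_le_right (by positivity) (one_le_pow₀ hx.le))
  have hslb : Summable fun l : ℕ => ((l:ℝ) + 1) * b l := by
    have hg : Summable fun m : ℕ => (m:ℝ) * (1 / x) ^ m := by
      have h := summable_pow_mul_geometric_of_norm_lt_one (R := ℝ) 1 (r := 1 / x) (by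
        rw [Real.norm_eq_abs, abs_of_nonneg hrx0]; exact hrx)
      simpa using h
    have hg1 : Summable fun l : ℕ => ((l:ℝ) + 1) * (1 / x) ^ (l + 1) := by
      refine ((summable_nat_add_iff 1).2 hg).congr fun l => ?_
      push_cast; ring
    refine Summable.of_nonneg_of_le (fun l => by positivity) (fun l => ?_) hg1
    refine mul_le_mul_of_nonneg_left ?_ (by positivity)
    rw [hb, div_pow, one_pow]
    exact one_div_le_one_div_of_le (by positivity)
      (le_mul_of_one_le_right (by positivity) (one_le_pow₀ hy.le))
  -- rewrite the goal in terms of a and b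
  have hx1 : x - 1 ≠ 0 := by linarith
  have hy1 : y - 1 ≠ 0 := by linarith
  have eA : ∀ k : ℕ, (n (k + 1) : ℝ) / (y ^ (k + 1) * x ^ (n (k + 1) + 1))
      = (n (k + 1) : ℝ) * a k / x := by
    intro k
    have h3 : (x:ℝ) ^ n (k + 1) ≠ 0 := by positivity
    have h4 : (y:ℝ) ^ (k + 1) ≠ 0 := by positivity
    rw [ha, pow_succ]; field_simp; ring_nf
  have eB : ∀ l : ℕ, (nt (l + 1) : ℝ) / (x ^ (l + 1) * y ^ (nt (l + 1) + 1))
      = (nt (l + 1) : ℝ) * b l / y := by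
    intro l
    have h3 : (y:ℝ) ^ nt (l + 1) ≠ 0 := by positivity
    have h4 : (x:ℝ) ^ (l + 1) ≠ 0 := by positivity
    rw [hb, pow_succ]; field_simp; ring_nf
  have eC : ∀ k : ℕ, ((k:ℝ) + 1) / (y ^ (k + 2) * x ^ n (k + 1))
      = ((k:ℝ) + 1) * a k / y := by
    intro k
    have h3 : (x:ℝ) ^ n (k + 1) ≠ 0 := by positivity
    have h4 : (y:ℝ) ^ (k + 1) ≠ 0 := by positivity
    rw [ha, show k + 2 = (k + 1) + 1 from rfl, pow_succ]; field_simp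
  have eD : ∀ l : ℕ, ((l:ℝ) + 1) / (x ^ (l + 2) * y ^ nt (l + 1))
      = ((l:ℝ) + 1) * b l / x := by
    intro l
    have h3 : (y:ℝ) ^ nt (l + 1) ≠ 0 := by positivity
    have h4 : (x:ℝ) ^ (l + 1) ≠ 0 := by positivity
    rw [hb, show l + 2 = (l + 1) + 1 from rfl, pow_succ]; field_simp
  refine ⟨(hsna.div_const x).congr fun k => (eA k).symm,
    (hsnb.div_const y).congr fun l => (eB l).symm,
    (hska.div_const y).congr fun k => (eC k).symm,
    (hslb.div_const x).congr fun l => (eD l).symm, ?_⟩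
  rw [tsum_congr eA, tsum_congr eB, tsum_congr eC, tsum_congr eD,
    tsum_div_const, tsum_div_const, tsum_div_const, tsum_div_const]
  set Sa := ∑' k : ℕ, ((k:ℝ) + 1) * a k with hSadef
  set Sb := ∑' l : ℕ, ((l:ℝ) + 1) * b l with hSbdef
  set Na := ∑' k : ℕ, (n (k + 1) : ℝ) * a k with hNadef
  set Nb := ∑' l : ℕ, (nt (l + 1) : ℝ) * b l with hNbdef
  have hsn1a : Summable fun k : ℕ => ((n (k + 1) : ℝ) + 1) * a k :=
    (hsna.add hsum1).congr fun k => by ring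
  have hsn1b : Summable fun l : ℕ => ((nt (l + 1) : ℝ) + 1) * b l :=
    (hsnb.add hsum2).congr fun l => by ring
  have hTa : ∑' k : ℕ, ((n (k + 1) : ℝ) + 1) * a k = Na + (x - 1) := by
    rw [tsum_congr (fun k : ℕ => by ring :
        ∀ k : ℕ, ((n (k + 1) : ℝ) + 1) * a k = (n (k + 1) : ℝ) * a k + a k),
      hsna.tsum_add hsum1, hNadef, heq1]
  have hTb : ∑' l : ℕ, ((nt (l + 1) : ℝ) + 1) * b l = Nb + (y - 1) := by
    rw [tsum_congr (fun l : ℕ => by ring :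
        ∀ l : ℕ, ((nt (l + 1) : ℝ) + 1) * b l = (nt (l + 1) : ℝ) * b l + b l),
      hsnb.tsum_add hsum2, hNbdef, heq2]
  have key : ∀ k : ℕ, ((k:ℝ) + 1) * Sb
      ≤ ((n (k + 1) : ℝ) + 1) * ∑' l : ℕ, ((nt (l + 1) : ℝ) + 1) * b l := by
    intro k
    rw [hSbdef, ← tsum_mul_left, ← tsum_mul_left]
    refine Summable.tsum_le_tsum (fun l => ?_) (hslb.mul_left _) (hsn1b.mul_left _)
    have h' : ((k:ℝ) + 1) * ((l:ℝ) + 1) ≤ ((n (k + 1) : ℝ) + 1) * ((nt (l + 1) : ℝ) + 1) := by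
      exact_mod_cast hineq k l
    have h := mul_le_mul_of_nonneg_right h' (hbp l).le
    nlinarith [h]
  have step1 : Sa * Sb ≤ (Na + (x - 1)) * (Nb + (y - 1)) := by
    rw [← hTa, ← hTb, hSadef, ← tsum_mul_right, ← tsum_mul_right]
    refine Summable.tsum_le_tsum (fun k => ?_) (hska.mul_right _) (hsn1a.mul_right _)
    have h := mul_le_mul_of_nonneg_left (key k) (hap k).le
    nlinarith [h]
  have hNa0 : 0 ≤ Na := tsum_nonneg fun k => by positivity
  have hNb0 : 0 ≤ Nb := tsum_nonneg fun l => by positivity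
  have hSa0 : 0 ≤ Sa := tsum_nonneg fun k => by positivity
  have hSb0 : 0 ≤ Sb := tsum_nonneg fun l => by positivity
  have hstrict : Sa * Sb < (Na + x) * (Nb + y) := by nlinarith [step1]
  have hR : (1 + Na / x) * (1 + Nb / y) = (Na + x) * (Nb + y) / (x * y) := by
    field_simp; ring
  have hL : Sa / y * (Sb / x) = Sa * Sb / (x * y) := by ring
  rw [hL, hR, div_lt_div_iff₀ (by positivity) (by positivity)]
  nlinarith [mul_lt_mul_of_pos_right hstrict (by positivity : (0:ℝ) < x * y)]
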